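/- If the problem is driven by initial conditions only (f = 0, homogeneous boundary data), the space–time DG solution satisfies the unconditional stability bound |(v_h, σ_h)|_DG ≤ (2‖c^{-1}v₀‖²_{L²(Ω)} + 2‖σ₀‖²_{L²(Ω)²})^{1/2}. -/
import Mathlib


open scoped RealInnerProductSpace

/-- Unconditional stability of the space–time DG scheme for problems driven by initial
conditions only (`f = 0`, homogeneous boundary data): the DG solution satisfies
`|(v_h,σ_h)|_DG ≤ (2‖c⁻¹v₀‖² + 2‖σ₀‖²)^{1/2}`.

Here: `dg` is the DG seminorm; `t0, s0` map a discrete field to its (`c⁻¹`-weighted) scalar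
trace and its vector trace on `Ω × {0}`, viewed in abstract `L²`-type real inner product
spaces `H1, H2`; `a = c⁻¹v₀` and `b = σ₀` are the initial data; `hsem` records that the DG
seminorm contains the terms `½‖c⁻¹w‖²_{L²(F⁰)} + ½‖τ‖²_{L²(F⁰)}`; `hcoer` is the coercivity
identity `A_DG(v_h,σ_h;v_h,σ_h) = |(v_h,σ_h)|²_DG`; `heq` is the DG equation tested with the
discrete solution itself, with `ℓ(w,τ) = ∫_{Ω×{0}} (c⁻²v₀w + σ₀·τ)`. -/
theorem dg_unconditional_stability {V H1 H2 : Type*}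
    [NormedAddCommGroup H1] [InnerProductSpace ℝ H1]
    [NormedAddCommGroup H2] [InnerProductSpace ℝ H2]
    (A : V → V → ℝ) (dg : V → ℝ) (hdg : ∀ w, 0 ≤ dg w)
    (t0 : V → H1) (s0 : V → H2) (a : H1) (b : H2)
    (hsem : ∀ w, (1/2) * ‖t0 w‖^2 + (1/2) * ‖s0 w‖^2 ≤ (dg w)^2)
    (vh : V)
    (hcoer : A vh vh = (dg vh)^2)
    (heq : A vh vh = ⟪a, t0 vh⟫ + ⟪b, s0 vh⟫) :
    dg vh ≤ Real.sqrt (2 * ‖a‖^2 + 2 * ‖b‖^2) := by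
  have hx := hdg vh
  have h1 : ⟪a, t0 vh⟫ ≤ ‖a‖ * ‖t0 vh‖ := real_inner_le_norm a (t0 vh)
  have h2 : ⟪b, s0 vh⟫ ≤ ‖b‖ * ‖s0 vh‖ := real_inner_le_norm b (s0 vh)
  have hd2 : (dg vh)^2 ≤ ‖a‖ * ‖t0 vh‖ + ‖b‖ * ‖s0 vh‖ := by
    rw [← hcoer, heq]; linarith
  have hts : ‖t0 vh‖^2 + ‖s0 vh‖^2 ≤ 2 * (dg vh)^2 := by
    have := hsem vh; linarith
  have hcs : (‖a‖ * ‖t0 vh‖ + ‖b‖ * ‖s0 vh‖)^2 ≤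
      (‖a‖^2 + ‖b‖^2) * (‖t0 vh‖^2 + ‖s0 vh‖^2) := by
    nlinarith [sq_nonneg (‖a‖ * ‖s0 vh‖ - ‖b‖ * ‖t0 vh‖)]
  have hkey : (dg vh)^2 * (dg vh)^2 ≤ (2 * ‖a‖^2 + 2 * ‖b‖^2) * (dg vh)^2 := by
    nlinarith [sq_nonneg (‖a‖ * ‖t0 vh‖ + ‖b‖ * ‖s0 vh‖), sq_nonneg ‖a‖, sq_nonneg ‖b‖,
      sq_nonneg (‖t0 vh‖), sq_nonneg (‖s0 vh‖)]
  rcases eq_or_lt_of_le hx with h0 | h0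
  · rw [← h0]; exact Real.sqrt_nonneg _
  · have hsq : (dg vh)^2 ≤ 2 * ‖a‖^2 + 2 * ‖b‖^2 :=
      le_of_mul_le_mul_right hkey (pow_pos h0 2)
    exact (Real.le_sqrt hx (by positivity)).mpr hsq
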